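/- For the (1,4) spectral curve, define the free energies: F_0(λ,t) = −t⁶/972 + 2λt³/27 − 3λ²/4 + (λ²/4)·log(3λ²), F_1(λ) = −(1/12)·log λ, and for g ≥ 2, F_g(λ) = (B_{2g}/(2g(2g−2)))·λ^{2−2g}, regarded as real-analytic functions of λ > 0 (t ∈ ℝ a parameter); here B_n denotes the n-th Bernoulli number, defined by w/(e^w − 1) = ∑_{n≥0} B_n·w^n/n!, and B_n(X) denotes the n-th Bernoulli polynomial, defined by w·e^{Xw}/(e^w − 1) = ∑_{n≥0} B_n(X)·w^n/n!. Then for all t ∈ ℝ, λ > 0, ν ∈ ℝ, and every integer m ≥ 1: B_{m+1}(ν)/(m(m+1)) · λ^{−m} = ∑ (((1−ν)^n − (−ν)^n)/n!)·F_g^{(n)}(λ), where the sum is over all pairs (g, n) with g ≥ 0, n ≥ 1, and 2g − 2 + n = m (derivatives in λ). -/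

import Mathlib

/-- The free energies of the (1,4) spectral curve:
`F₀(λ,t) = −t⁶/972 + 2λt³/27 − 3λ²/4 + (λ²/4)·log(3λ²)`, `F₁(λ) = −(1/12)·log λ`, and
`F_g(λ) = (B_{2g}/(2g(2g−2)))·λ^{2−2g}` for `g ≥ 2`. -/
noncomputable def F14 (t : ℝ) : ℕ → ℝ → ℝ
  | 0 => fun l => -t ^ 6 / 972 + 2 * l * t ^ 3 / 27 - 3 * l ^ 2 / 4
      + l ^ 2 / 4 * Real.log (3 * l ^ 2)
  | 1 => fun l => -(1 / 12) * Real.log l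
  | (g + 2) => fun l =>
      ((bernoulli (2 * (g + 2)) : ℝ) / ((2 * (g + 2) : ℝ) * ((2 * (g + 2) : ℝ) - 2)))
        * l ^ ((2 : ℤ) - 2 * ((g : ℤ) + 2))


lemma iter_congr_Ioi {f g : ℝ → ℝ} (h : ∀ x ∈ Set.Ioi (0:ℝ), f x = g x) (n : ℕ) :
    ∀ x ∈ Set.Ioi (0:ℝ), iteratedDeriv n f x = iteratedDeriv n g x := by
  induction n with
  | zero => simpa using h
  | succ n ih =>
    intro x hx
    rw [iteratedDeriv_succ, iteratedDeriv_succ]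
    exact Filter.EventuallyEq.deriv_eq
      (Filter.eventuallyEq_of_mem (isOpen_Ioi.mem_nhds hx) ih)

lemma iter_shift {f h : ℝ → ℝ} (hf : ∀ x ∈ Set.Ioi (0:ℝ), HasDerivAt f (h x) x) (n : ℕ) :
    ∀ x ∈ Set.Ioi (0:ℝ), iteratedDeriv (n+1) f x = iteratedDeriv n h x := by
  intro x hx
  rw [iteratedDeriv_succ']
  exact iter_congr_Ioi (fun y hy => (hf y hy).deriv) n x hx

lemma iter_zpow (n : ℕ) : ∀ (c : ℝ) (k : ℤ), ∀ x ∈ Set.Ioi (0:ℝ),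
    iteratedDeriv n (fun y : ℝ => c * y ^ k) x
      = (c * ∏ i ∈ Finset.range n, ((k:ℝ) - i)) * x ^ (k - n) := by
  induction n with
  | zero => intro c k x _; simp
  | succ n ih =>
    intro c k x hx
    have step : ∀ y ∈ Set.Ioi (0:ℝ), HasDerivAt (fun y : ℝ => c * y ^ k)
        ((c * k) * y ^ (k - 1)) y := by
      intro y hy
      have := (hasDerivAt_zpow k y (Or.inl (ne_of_gt hy))).const_mul c
      simpa [mul_assoc] using this
    have hprod : (∏ i ∈ Finset.range (n+1), ((k:ℝ) - i))
        = (k:ℝ) * ∏ i ∈ Finset.range n, (((k - 1 : ℤ):ℝ) - i) := by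
      rw [Finset.prod_range_succ', mul_comm]
      congr 1
      · push_cast; ring
      · apply Finset.prod_congr rfl; intro i _; push_cast; ring
    rw [iter_shift step n x hx, ih (c * k) (k - 1) x hx, hprod,
      show k - 1 - (n:ℤ) = k - ((n:ℤ)+1) by ring]
    push_cast
    ring



lemma prod_desc (a n : ℕ) :
    ∏ i ∈ Finset.range n, (-1 - (a:ℝ) - i) = (-1)^n * ((a+n).factorial / a.factorial) := by
  induction n with
  | zero => field_simp; simp
  | succ n ih =>
    rw [Finset.prod_range_succ, ih, show a + (n+1) = (a+n)+1 from rfl, Nat.factorial_succ]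
    have h : (a.factorial : ℝ) ≠ 0 := Nat.cast_ne_zero.2 (Nat.factorial_ne_zero a)
    field_simp
    push_cast
    ring

lemma hasDeriv_log3sq (x : ℝ) (hx : 0 < x) :
    HasDerivAt (fun y : ℝ => Real.log (3*y^2)) (2/x) x := by
  have h1 : HasDerivAt (fun y : ℝ => 3*y^2) (3*(2*x^1)) x := (hasDerivAt_pow 2 x).const_mul 3
  have h2 : HasDerivAt (fun y : ℝ => Real.log (3*y^2)) ((3*x^2)⁻¹ * (3*(2*x^1))) x :=
    (Real.hasDerivAt_log (by positivity)).comp x h1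
  convert h2 using 1
  field_simp

lemma hasDeriv_F0 (t x : ℝ) (hx : 0 < x) :
    HasDerivAt (F14 t 0) (2*t^3/27 - x + x/2 * Real.log (3*x^2)) x := by
  have hlog := hasDeriv_log3sq x hx
  have H : HasDerivAt (fun l : ℝ => -t ^ 6 / 972 + 2 * l * t ^ 3 / 27 - 3 * l ^ 2 / 4
      + l ^ 2 / 4 * Real.log (3 * l ^ 2))
      (((0:ℝ) + 2*1*t^3/27 - 3*(2*x^1)/4) + ((2*x^1)/4 * Real.log (3*x^2) + x^2/4 * (2/x))) x := by
    exact (((hasDerivAt_const x (-t^6/972)).add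
      ((((hasDerivAt_id x).const_mul 2).mul_const (t^3)).div_const 27)).sub
      (((hasDerivAt_pow 2 x).const_mul 3).div_const 4)).add
      (((hasDerivAt_pow 2 x).div_const 4).mul hlog)
  have : F14 t 0 = fun l : ℝ => -t ^ 6 / 972 + 2 * l * t ^ 3 / 27 - 3 * l ^ 2 / 4
      + l ^ 2 / 4 * Real.log (3 * l ^ 2) := rfl
  rw [this]
  convert H using 1
  field_simp
  ring

lemma hasDeriv_h1 (t x : ℝ) (hx : 0 < x) :
    HasDerivAt (fun y : ℝ => 2*t^3/27 - y + y/2 * Real.log (3*y^2))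
      ((1/2) * Real.log (3*x^2)) x := by
  have hlog := hasDeriv_log3sq x hx
  have H : HasDerivAt (fun y : ℝ => 2*t^3/27 - y + y/2 * Real.log (3*y^2))
      (((0:ℝ) - 1) + ((1/2) * Real.log (3*x^2) + x/2 * (2/x))) x :=
    ((hasDerivAt_const x (2*t^3/27)).sub (hasDerivAt_id x)).add
      (((hasDerivAt_id x).div_const 2).mul hlog)
  convert H using 1
  field_simp
  ring

lemma hasDeriv_h2 (x : ℝ) (hx : 0 < x) :
    HasDerivAt (fun y : ℝ => (1/2) * Real.log (3*y^2)) ((1:ℝ) * x ^ (-1:ℤ)) x := by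
  have H := (hasDeriv_log3sq x hx).const_mul (1/2 : ℝ)
  refine H.congr_deriv ?_
  rw [zpow_neg_one]
  field_simp

lemma hasDeriv_F1 (t x : ℝ) (hx : 0 < x) :
    HasDerivAt (F14 t 1) ((-(1/12):ℝ) * x ^ (-1:ℤ)) x := by
  have H := (Real.hasDerivAt_log hx.ne').const_mul (-(1/12) : ℝ)
  have : F14 t 1 = fun l : ℝ => -(1 / 12) * Real.log l := rfl
  rw [this]
  refine H.congr_deriv ?_
  rw [zpow_neg_one]

lemma iter_F0 (t : ℝ) (n : ℕ) (x : ℝ) (hx : x ∈ Set.Ioi (0:ℝ)) :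
    iteratedDeriv (n+3) (F14 t 0) x = ((-1:ℝ)^n * n.factorial) * x ^ (-1 - (n:ℤ)) := by
  have e0 := iter_shift (fun y hy => hasDeriv_F0 t y hy) (n+2) x hx
  have e1 := iter_shift (fun y hy => hasDeriv_h1 t y hy) (n+1) x hx
  have e2 := iter_shift (fun y hy => hasDeriv_h2 y hy) n x hx
  have e3 := iter_zpow n 1 (-1) x hx
  rw [show n+3 = (n+2)+1 from rfl, e0, e1, e2, e3]
  have : ∏ i ∈ Finset.range n, (((-1:ℤ):ℝ) - i) = (-1)^n * (n.factorial : ℝ) := by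
    have := prod_desc 0 n
    simpa using this
  rw [this, one_mul]

lemma iter_F1 (t : ℝ) (n : ℕ) (x : ℝ) (hx : x ∈ Set.Ioi (0:ℝ)) :
    iteratedDeriv (n+1) (F14 t 1) x = (-(1/12) * ((-1:ℝ)^n * n.factorial)) * x ^ (-1 - (n:ℤ)) := by
  have e0 := iter_shift (fun y hy => hasDeriv_F1 t y hy) n x hx
  have e1 := iter_zpow n (-(1/12)) (-1) x hx
  rw [e0, e1]
  have : ∏ i ∈ Finset.range n, (((-1:ℤ):ℝ) - i) = (-1)^n * (n.factorial : ℝ) := by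
    have := prod_desc 0 n
    simpa using this
  rw [this]

lemma iter_Fg (t : ℝ) (g n : ℕ) (x : ℝ) (hx : x ∈ Set.Ioi (0:ℝ)) :
    iteratedDeriv n (F14 t (g+2)) x
      = ((bernoulli (2 * (g + 2)) : ℝ) / ((2 * (g + 2) : ℝ) * ((2 * (g + 2) : ℝ) - 2))
          * ((-1)^n * ((2*g+1+n).factorial / (2*g+1).factorial)))
        * x ^ ((2 : ℤ) - 2 * ((g : ℤ) + 2) - n) := by
  have e := iter_zpow n ((bernoulli (2 * (g + 2)) : ℝ) / ((2 * (g + 2) : ℝ) * ((2 * (g + 2) : ℝ) - 2)))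
    ((2 : ℤ) - 2 * ((g : ℤ) + 2)) x hx
  have hF : F14 t (g+2) = fun l : ℝ =>
      ((bernoulli (2 * (g + 2)) : ℝ) / ((2 * (g + 2) : ℝ) * ((2 * (g + 2) : ℝ) - 2)))
        * l ^ ((2 : ℤ) - 2 * ((g : ℤ) + 2)) := rfl
  rw [hF, e]
  have : ∏ i ∈ Finset.range n, ((((2 : ℤ) - 2 * ((g : ℤ) + 2) : ℤ):ℝ) - i)
      = (-1)^n * (((2*g+1)+n).factorial / (2*g+1).factorial : ℝ) := by
    have := prod_desc (2*g+1) n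
    rw [← this]
    apply Finset.prod_congr rfl
    intro i _
    push_cast
    ring
  rw [this]


open Polynomial

-- bernoulli n = (-1)^n * bernoulli' n
lemma bern_neg_one_pow (n : ℕ) : _root_.bernoulli n = (-1:ℚ)^n * bernoulli' n := by
  rcases eq_or_ne n 1 with rfl | h
  · rw [_root_.bernoulli_one, bernoulli'_one]; norm_num
  · rw [bernoulli_eq_bernoulli'_of_ne_one h]
    rcases Nat.even_or_odd n with he | ho
    · rw [he.neg_one_pow, one_mul]
    · rcases eq_or_ne n 0 with rfl | h0
      · norm_num
      · simp [bernoulli'_eq_zero_of_odd ho (by omega)]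

/-- reflection: `(bernoulli n).comp (1 - X) = (-1)^n • bernoulli n` -/
lemma bernoulli_comp_one_sub (n : ℕ) :
    (Polynomial.bernoulli n).comp (1 - X) = (-1:ℚ)^n • Polynomial.bernoulli n := by
  induction n with
  | zero => simp
  | succ n ih =>
    set P : ℚ[X] := (Polynomial.bernoulli (n+1)).comp (1 - X)
      - (-1:ℚ)^(n+1) • Polynomial.bernoulli (n+1) with hP
    have hder : derivative P = 0 := by
      rw [hP, derivative_sub, derivative_smul, derivative_comp,
        Polynomial.derivative_bernoulli_add_one, mul_comp, add_comp, natCast_comp,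
        one_comp, ih]
      simp only [derivative_sub, derivative_one, derivative_X, zero_sub, smul_eq_C_mul,
        map_pow, map_neg, map_one]
      ring
    have hC := Polynomial.eq_C_of_derivative_eq_zero hder
    have heval1 : P.eval 1 = 0 := by
      rw [hP]
      simp only [eval_sub, eval_comp, eval_sub, eval_one, eval_X, sub_self, eval_smul]
      rw [Polynomial.bernoulli_eval_zero, Polynomial.bernoulli_eval_one,
        bern_neg_one_pow (n+1)]
      simp [smul_eq_mul]
    have hP0 : P = 0 := by
      rw [hC] at heval1 ⊢
      rw [eval_C] at heval1
      rw [heval1, map_zero]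
    have := sub_eq_zero.mp (hP ▸ hP0)
    linear_combination this

lemma bernoulli_eval_one_sub (n : ℕ) (x : ℚ) :
    (Polynomial.bernoulli n).eval (1 - x) = (-1:ℚ)^n * (Polynomial.bernoulli n).eval x := by
  have := congrArg (eval x) (bernoulli_comp_one_sub n)
  simpa [eval_comp, smul_eq_mul] using this

lemma Ea (K : ℕ) (z : ℚ) : (Polynomial.bernoulli K).eval z
    = ∑ k ∈ Finset.range (K+1), _root_.bernoulli k * (K.choose k) * z^(K-k) := by
  rw [Polynomial.bernoulli, eval_finset_sum]
  apply Finset.sum_congr rfl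
  intro k _
  rw [eval_monomial]

lemma natid (K k : ℕ) : (K+1-k) * ((K+1).choose k) = (K+1) * (K.choose k) := by
  rw [mul_comm, ← Nat.choose_succ_right_eq, ← Nat.add_one_mul_choose_eq]

lemma Eb (K : ℕ) (z : ℚ) :
    ∑ k ∈ Finset.range (K+2), (((K:ℚ)+1) - k) * _root_.bernoulli k * (((K+1).choose k : ℕ) : ℚ) * z^(K+1-k)
      = ((K:ℚ)+1) * z * (Polynomial.bernoulli K).eval z := by
  rw [Finset.sum_range_succ, Ea, Finset.mul_sum]
  have htop : (((K:ℚ)+1) - (K+1 : ℕ)) * _root_.bernoulli (K+1) * (((K+1).choose (K+1) : ℕ):ℚ) * z^(K+1-(K+1)) = 0 := by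
    push_cast; ring
  rw [htop, add_zero]
  apply Finset.sum_congr rfl
  intro k hk
  rw [Finset.mem_range] at hk
  have hk' : k ≤ K := by omega
  have h1 : (((K:ℚ)+1) - k) * (((K+1).choose k : ℕ):ℚ) = ((K:ℚ)+1) * ((K.choose k : ℕ):ℚ) := by
    have hn := natid K k
    have hc : ((K+1-k : ℕ):ℚ) = (K:ℚ)+1-k := by
      rw [Nat.cast_sub (by omega : k ≤ K+1)]; push_cast; ring
    rw [← hc, ← Nat.cast_mul, hn, Nat.cast_mul]; push_cast; ring
  have h2 : z^(K+1-k) = z * z^(K-k) := by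
    rw [show K+1-k = (K-k)+1 by omega, pow_succ]; ring
  rw [h2]
  linear_combination (_root_.bernoulli k * z * z^(K-k)) * h1

lemma Isum (K : ℕ) (z : ℚ) :
    ∑ k ∈ Finset.range (K+2), ((k:ℚ) - 1) * _root_.bernoulli k * (((K+1).choose k : ℕ):ℚ) * z^(K+1-k)
      = (K:ℚ) * (Polynomial.bernoulli (K+1)).eval z
        - ((K:ℚ)+1) * z * (Polynomial.bernoulli K).eval z := by
  rw [← Eb K z, Ea (K+1) z, Finset.mul_sum, ← Finset.sum_sub_distrib]
  apply Finset.sum_congr rfl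
  intro k hk
  push_cast
  ring

lemma core (c : ℕ) (z : ℚ) :
    ∑ k ∈ Finset.range (c+3), ((k:ℚ) - 1) * _root_.bernoulli k * (((c+2).choose k : ℕ):ℚ)
        * ((1+z)^(c+2-k) - z^(c+2-k))
      = -((c:ℚ)+2) * (Polynomial.bernoulli (c+1)).eval (1+z) := by
  have h1 := Isum (c+1) (1+z)
  have h2 := Isum (c+1) z
  have expand : ∑ k ∈ Finset.range (c+3), ((k:ℚ) - 1) * _root_.bernoulli k * (((c+2).choose k : ℕ):ℚ)
        * ((1+z)^(c+2-k) - z^(c+2-k))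
      = (∑ k ∈ Finset.range (c+3), ((k:ℚ) - 1) * _root_.bernoulli k * (((c+2).choose k : ℕ):ℚ) * (1+z)^(c+2-k))
        - ∑ k ∈ Finset.range (c+3), ((k:ℚ) - 1) * _root_.bernoulli k * (((c+2).choose k : ℕ):ℚ) * z^(c+2-k) := by
    rw [← Finset.sum_sub_distrib]
    apply Finset.sum_congr rfl
    intro k _
    ring
  rw [expand]
  rw [show c+3 = (c+1)+2 from rfl] at *
  rw [show c+2 = (c+1)+1 from rfl] at *
  rw [h1, h2, Polynomial.bernoulli_eval_one_add ((c+1)+1) z,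
    Polynomial.bernoulli_eval_one_add (c+1) z]
  simp only [Nat.add_sub_cancel]
  push_cast
  ring


section VEFD
open Polynomial


lemma bern_odd {k : ℕ} (h : Odd k) (h1 : 1 < k) : _root_.bernoulli k = 0 := by
  rw [bernoulli_eq_bernoulli'_of_ne_one (by omega)]
  exact bernoulli'_eq_zero_of_odd h h1

def qc (g m : ℕ) : ℚ :=
  (-1)^m * (m-1).factorial * (2*(g:ℚ) - 1) * _root_.bernoulli (2*g) / (2*g).factorial

lemma scalar_q (m : ℕ) (hm : 1 ≤ m) (x : ℚ) :
    (Polynomial.bernoulli (m+1)).eval x / ((m:ℚ) * ((m:ℚ)+1))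
      = ∑ g ∈ (Finset.range (m+3)).filter (fun g => 2*g+1 ≤ m+2),
          ((1-x)^(m+2-2*g) - (-x)^(m+2-2*g)) / ((m+2-2*g).factorial : ℚ) * qc g m := by
  obtain ⟨m, rfl⟩ : ∃ k, m = k + 1 := ⟨m - 1, by omega⟩
  simp only [show m+1+2 = m+3 from by omega, show m+1+3 = m+4 from by omega,
    show m+1+1 = m+2 from by omega]
  set T : Finset ℕ := (Finset.range (m+4)).filter (fun g => 2*g+1 ≤ m+3) with hT
  set h : ℕ → ℚ := fun k => ((m.factorial:ℚ) * (-1)^(m+1) / ((m+3).factorial : ℚ))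
    * (((k:ℚ)-1) * _root_.bernoulli k * (((m+3).choose k : ℕ):ℚ)
        * ((1-x)^(m+3-k) - (-x)^(m+3-k))) with hh
  have step1 : ∑ g ∈ T, ((1-x)^(m+3-2*g) - (-x)^(m+3-2*g)) / ((m+3-2*g).factorial : ℚ) * qc g (m+1)
      = ∑ g ∈ T, h (2*g) := by
    apply Finset.sum_congr rfl
    intro g hg
    rw [hT, Finset.mem_filter] at hg
    have hcc := Nat.choose_mul_factorial_mul_factorial (show 2*g ≤ m+3 by omega)
    have hne1 : ((2*g).factorial : ℚ) ≠ 0 := Nat.cast_ne_zero.2 (Nat.factorial_ne_zero _)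
    have hne2 : ((m+3-2*g).factorial : ℚ) ≠ 0 := Nat.cast_ne_zero.2 (Nat.factorial_ne_zero _)
    have hne3 : ((m+3).factorial : ℚ) ≠ 0 := Nat.cast_ne_zero.2 (Nat.factorial_ne_zero _)
    have hcast : (((m+3).choose (2*g) : ℕ):ℚ) * ((2*g).factorial : ℚ) * ((m+3-2*g).factorial : ℚ)
        = ((m+3).factorial : ℚ) := by exact_mod_cast congrArg (Nat.cast (R := ℚ)) hcc
    have hccQ : (((m+3).choose (2*g) : ℕ):ℚ)
        = ((m+3).factorial : ℚ) / (((2*g).factorial : ℚ) * ((m+3-2*g).factorial : ℚ)) := by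
      rw [eq_div_iff (mul_ne_zero hne1 hne2)]
      linear_combination hcast
    rw [hh]
    simp only [qc, Nat.add_sub_cancel, hccQ]
    generalize ((1-x)^(m+3-2*g) - (-x)^(m+3-2*g) : ℚ) = D
    field_simp
    push_cast
    ring
  have step2 : ∑ g ∈ T, h (2*g) = ∑ k ∈ Finset.range (m+4), h k := by
    rw [← Finset.sum_image (f := h) (g := fun g => 2*g)
      (fun a _ b _ hab => by simp only [] at hab; omega)]
    apply Finset.sum_subset
    · intro k hk
      rw [Finset.mem_image] at hk
      obtain ⟨g, hg, rfl⟩ := hk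
      rw [hT, Finset.mem_filter] at hg
      rw [Finset.mem_range]
      omega
    · intro k hk hknot
      rw [Finset.mem_range] at hk
      rcases Nat.even_or_odd k with ⟨r, hr⟩ | hodd
      · by_cases hk2 : k ≤ m+2
        · exfalso
          apply hknot
          rw [Finset.mem_image]
          exact ⟨r, by rw [hT, Finset.mem_filter, Finset.mem_range]; omega, by omega⟩
        · have : m+3-k = 0 := by omega
          rw [hh]
          simp [this]
      · rcases eq_or_ne k 1 with rfl | hne
        · rw [hh]; simp
        · simp only [hh]
          rw [bern_odd hodd (by rcases hodd with ⟨j, hj⟩; omega)]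
          simp
  have step3 : ∑ k ∈ Finset.range (m+4), h k
      = ((m.factorial:ℚ) * (-1)^(m+1) / ((m+3).factorial : ℚ))
        * (-((m:ℚ)+3) * (Polynomial.bernoulli (m+2)).eval (1-x)) := by
    rw [hh, ← Finset.mul_sum]
    have hc := core (m+1) (-x)
    simp only [show (1:ℚ) + -x = 1 - x from by ring] at hc
    simp only [show m+1+3 = m+4 from by omega, show m+1+2 = m+3 from by omega,
      show m+1+1 = m+2 from by omega] at hc
    rw [hc]
    push_cast
    ring
  rw [step1, step2, step3]
  have key : ((-1:ℚ))^(m+1) * (Polynomial.bernoulli (m+2)).eval (1-x)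
      = -(Polynomial.bernoulli (m+2)).eval x := by
    rw [_root_.bernoulli_eval_one_sub, ← mul_assoc, ← pow_add,
      show (m+1)+(m+2) = 2*(m+1)+1 by omega, pow_succ, pow_mul]
    norm_num
  have hfac : ((m+3).factorial : ℚ) = ((m:ℚ)+3) * ((m:ℚ)+2) * ((m:ℚ)+1) * (m.factorial : ℚ) := by
    rw [show m+3 = ((m+1)+1)+1 from rfl, Nat.factorial_succ, Nat.factorial_succ, Nat.factorial_succ]
    push_cast
    ring
  rw [show ((m.factorial:ℚ) * (-1)^(m+1) / ((m+3).factorial : ℚ))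
        * (-((m:ℚ)+3) * (Polynomial.bernoulli (m+2)).eval (1-x))
      = -((m.factorial:ℚ) / ((m+3).factorial : ℚ) * (((m:ℚ)+3)))
        * ((-1:ℚ)^(m+1) * (Polynomial.bernoulli (m+2)).eval (1-x)) from by ring,
    key, hfac]
  have hmf : (m.factorial : ℚ) ≠ 0 := Nat.cast_ne_zero.2 (Nat.factorial_ne_zero _)
  have h1 : ((m:ℚ)+1) ≠ 0 := by positivity
  have h2 : ((m:ℚ)+2) ≠ 0 := by positivity
  have h3 : ((m:ℚ)+3) ≠ 0 := by positivity
  push_cast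
  field_simp
  ring

lemma scalar_real (m : ℕ) (hm : 1 ≤ m) (ν : ℝ) :
    (Polynomial.aeval ν (Polynomial.bernoulli (m+1)) : ℝ) / ((m:ℝ) * ((m:ℝ)+1))
      = ∑ g ∈ (Finset.range (m+3)).filter (fun g => 2*g+1 ≤ m+2),
          ((1-ν)^(m+2-2*g) - (-ν)^(m+2-2*g)) / ((m+2-2*g).factorial : ℝ) * ((qc g m : ℚ):ℝ) := by
  have hpoly : Polynomial.C (((m:ℚ) * ((m:ℚ)+1))⁻¹) * Polynomial.bernoulli (m+1)
      = ∑ g ∈ (Finset.range (m+3)).filter (fun g => 2*g+1 ≤ m+2),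
          Polynomial.C (qc g m / ((m+2-2*g).factorial : ℚ))
            * ((1 - X)^(m+2-2*g) - (-X)^(m+2-2*g)) := by
    apply Polynomial.funext
    intro r
    rw [eval_finset_sum]
    simp only [eval_mul, eval_C, eval_sub, eval_pow, eval_one, eval_X, eval_neg]
    rw [inv_mul_eq_div, scalar_q m hm r]
    apply Finset.sum_congr rfl
    intro g _
    ring
  have := congrArg (Polynomial.aeval ν) hpoly
  simp only [map_sum, map_mul, map_sub, map_pow, map_one, map_neg, aeval_X, aeval_C,
    eq_ratCast] at this
  push_cast at this
  have hfil : (Finset.range (m+3)).filter (fun g => 2*g+1 ≤ m+2)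
      = (Finset.range (m+3)).filter (fun g => 2*g ≤ m+1) := by
    apply Finset.filter_congr
    intro g _
    omega
  rw [div_eq_inv_mul, this, hfil]
  apply Finset.sum_congr rfl
  intro g _
  push_cast
  ring

end VEFD



lemma bernoulli_two_q : _root_.bernoulli 2 = 1/6 := by
  rw [bernoulli_eq_bernoulli'_of_ne_one (by norm_num), bernoulli'_two]

lemma iter_formula (t l : ℝ) (hl : 0 < l) (m g : ℕ) (hm : 1 ≤ m) (hg : 2*g+1 ≤ m+2) :
    iteratedDeriv (m+2-2*g) (F14 t g) l = ((qc g m : ℚ):ℝ) * l^(-(m:ℤ)) := by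
  have hl' : l ∈ Set.Ioi (0:ℝ) := Set.mem_Ioi.mpr hl
  obtain ⟨m, rfl⟩ : ∃ k, m = k + 1 := ⟨m - 1, by omega⟩
  match g with
  | 0 =>
    rw [show m+1+2-2*0 = m+3 by omega, iter_F0 t m l hl']
    rw [show (-(((m:ℕ)+1:ℕ):ℤ)) = -1 - (m:ℤ) by push_cast; ring]
    simp only [qc, Nat.add_sub_cancel, Nat.mul_zero, _root_.bernoulli_zero, Nat.factorial_zero]
    push_cast
    ring
  | 1 =>
    rw [show m+1+2-2*1 = m+1 by omega, iter_F1 t m l hl']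
    rw [show (-(((m:ℕ)+1:ℕ):ℤ)) = -1 - (m:ℤ) by push_cast; ring]
    simp only [qc, Nat.add_sub_cancel, show (2*1:ℕ) = 2 from rfl, bernoulli_two_q,
      show (Nat.factorial 2) = 2 from rfl]
    push_cast
    ring
  | (g + 2) =>
    obtain ⟨n, rfl⟩ : ∃ n, m = 2*g+1+n := ⟨m - (2*g+1), by omega⟩
    rw [show 2*g+1+n+1+2-2*(g+2) = n by omega, iter_Fg t g n l hl']
    rw [show ((2 : ℤ) - 2 * ((g : ℤ) + 2) - n) = -(((2*g+1+n+1:ℕ)):ℤ) by push_cast; ring]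
    congr 1
    have cast_eq : ((bernoulli (2 * (g + 2)) : ℝ) / ((2 * (g + 2) : ℝ) * ((2 * (g + 2) : ℝ) - 2))
          * ((-1)^n * ((2*g+1+n).factorial / (2*g+1).factorial)))
        = (((_root_.bernoulli (2*(g+2)) / ((2*(g:ℚ)+4) * (2*(g:ℚ)+2))
          * ((-1)^n * (((2*g+1+n).factorial:ℚ) / ((2*g+1).factorial:ℚ)))) : ℚ) : ℝ) := by
      push_cast
      ring
    rw [cast_eq]
    have hsignQ : ((-1:ℚ))^(2*g+1+n+1) = (-1:ℚ)^n := by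
      rw [show 2*g+1+n+1 = n + 2*(g+1) by omega, pow_add, pow_mul]
      norm_num
    have hfacQ : (((2*(g+2)).factorial : ℕ) : ℚ)
        = (2*(g:ℚ)+4) * (2*(g:ℚ)+3) * (2*(g:ℚ)+2) * ((2*g+1).factorial : ℚ) := by
      rw [show 2*(g+2) = (((2*g+1)+1)+1)+1 by omega, Nat.factorial_succ, Nat.factorial_succ,
        Nat.factorial_succ]
      push_cast
      ring
    have h1 : ((2*g+1).factorial : ℚ) ≠ 0 := Nat.cast_ne_zero.2 (Nat.factorial_ne_zero _)
    have h2 : (2*(g:ℚ)+4) ≠ 0 := by positivity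
    have h3 : (2*(g:ℚ)+3) ≠ 0 := by positivity
    have h4 : (2*(g:ℚ)+2) ≠ 0 := by positivity
    have hq : _root_.bernoulli (2*(g+2)) / ((2*(g:ℚ)+4) * (2*(g:ℚ)+2))
          * ((-1)^n * (((2*g+1+n).factorial:ℚ) / ((2*g+1).factorial:ℚ)))
        = qc (g+2) (2*g+1+n+1) := by
      simp only [qc, Nat.add_sub_cancel, hsignQ, hfacQ]
      field_simp
      push_cast
      ring
    exact_mod_cast congrArg (Rat.cast (K := ℝ)) hq


/-- For all `t ∈ ℝ`, `λ > 0`, `ν ∈ ℝ` and every integer `m ≥ 1`: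
`B_{m+1}(ν)/(m(m+1)) · λ^{−m}
  = ∑_{(g,n) : g ≥ 0, n ≥ 1, 2g−2+n = m} (((1−ν)ⁿ − (−ν)ⁿ)/n!)·F_g⁽ⁿ⁾(λ)`,
where `B_n(X)` is the `n`-th Bernoulli polynomial. -/
theorem voros_eq_free_energy_14 (t l ν : ℝ) (hl : 0 < l) (m : ℕ) (hm : 1 ≤ m) :
    (Polynomial.aeval ν (Polynomial.bernoulli (m + 1)) : ℝ) / ((m : ℝ) * ((m : ℝ) + 1))
        * l ^ (-(m : ℤ))
      = ∑ p ∈ (Finset.range (m + 3) ×ˢ Finset.range (m + 3)).filter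
            (fun p => 1 ≤ p.2 ∧ 2 * p.1 + p.2 = m + 2),
          (((1 - ν) ^ p.2 - (-ν) ^ p.2) / (p.2.factorial : ℝ))
            * iteratedDeriv p.2 (F14 t p.1) l := by
  have hbij : ∑ p ∈ (Finset.range (m + 3) ×ˢ Finset.range (m + 3)).filter
            (fun p => 1 ≤ p.2 ∧ 2 * p.1 + p.2 = m + 2),
          (((1 - ν) ^ p.2 - (-ν) ^ p.2) / (p.2.factorial : ℝ))
            * iteratedDeriv p.2 (F14 t p.1) l
      = ∑ g ∈ (Finset.range (m+3)).filter (fun g => 2*g+1 ≤ m+2),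
          (((1 - ν) ^ (m+2-2*g) - (-ν) ^ (m+2-2*g)) / ((m+2-2*g).factorial : ℝ))
            * iteratedDeriv (m+2-2*g) (F14 t g) l := by
    apply Finset.sum_nbij' (i := fun p => p.1) (j := fun g => (g, m+2-2*g))
    · intro p hp
      simp only [Finset.mem_filter, Finset.mem_product, Finset.mem_range] at hp ⊢
      omega
    · intro g hg
      simp only [Finset.mem_filter, Finset.mem_product, Finset.mem_range] at hg ⊢
      omega
    · intro p hp
      simp only [Finset.mem_filter, Finset.mem_product, Finset.mem_range] at hp
      have : m+2-2*p.1 = p.2 := by omega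
      rw [this]
    · intro g hg
      simp
    · intro p hp
      simp only [Finset.mem_filter, Finset.mem_product, Finset.mem_range] at hp
      have : m+2-2*p.1 = p.2 := by omega
      rw [this]
  rw [hbij]
  have hterm : ∀ g ∈ (Finset.range (m+3)).filter (fun g => 2*g+1 ≤ m+2),
      (((1 - ν) ^ (m+2-2*g) - (-ν) ^ (m+2-2*g)) / ((m+2-2*g).factorial : ℝ))
            * iteratedDeriv (m+2-2*g) (F14 t g) l
      = (((1 - ν) ^ (m+2-2*g) - (-ν) ^ (m+2-2*g)) / ((m+2-2*g).factorial : ℝ))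
            * ((qc g m : ℚ):ℝ) * l^(-(m:ℤ)) := by
    intro g hg
    simp only [Finset.mem_filter, Finset.mem_range] at hg
    rw [iter_formula t l hl m g hm hg.2, mul_assoc]
  rw [Finset.sum_congr rfl hterm, ← Finset.sum_mul, ← scalar_real m hm ν]
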